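/- arXiv:1706.05266 — 3 statements merged into one kernel-verified Lean document; each statement's English description precedes it below -/
import Mathlib

section
/- Let u ∈ W^{1,1}(ℝⁿ, ℝᵈ). Then there is a constant C_M depending only on n and d such that for every ball B ⊂ ℝⁿ of radius r > 0 and every ε > 0, the diameter of the set {u(x) : x ∈ B, (M∇u)(x) ≤ ε} is at most C_M · ε · r, where M denotes the Hardy–Littlewood maximal operator applied to |∇u|. -/
open MeasureTheory Metric Set
open scoped ENNReal NNReal

/-- The Hardy–Littlewood maximal function of an `ℝ≥0∞`-valued function. -/
noncomputable def maxFn {n : ℕ} (f : EuclideanSpace ℝ (Fin n) → ℝ≥0∞)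
    (x : EuclideanSpace ℝ (Fin n)) : ℝ≥0∞ :=
  ⨆ (r : ℝ) (_ : 0 < r), (∫⁻ y in Metric.ball x r, f y) / volume (Metric.ball x r)

/-- Fundamental theorem of calculus bound along segments for everywhere differentiable maps. -/
lemma ftc_bound {n d : ℕ} (u : EuclideanSpace ℝ (Fin n) → EuclideanSpace ℝ (Fin d))
    (hdiff : Differentiable ℝ u) (x z : EuclideanSpace ℝ (Fin n)) :
    (‖u z - u x‖₊ : ℝ≥0∞) ≤
      (∫⁻ t in Set.Ioc (0:ℝ) 1, (‖fderiv ℝ u (x + t • (z - x))‖₊ : ℝ≥0∞)) * ‖z - x‖₊ := by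
  set γ : ℝ → EuclideanSpace ℝ (Fin n) := fun t => x + t • (z - x) with hγ
  by_cases hzx : z = x
  · simp [hzx]
  by_cases hfin : (∫⁻ t in Set.Ioc (0:ℝ) 1, (‖fderiv ℝ u (γ t)‖₊ : ℝ≥0∞)) = ∞
  · rw [hfin, ENNReal.top_mul (by simpa using sub_ne_zero_of_ne hzx)]
    exact le_top
  -- derivative of u ∘ γ
  have hγd : ∀ t : ℝ, HasDerivAt γ (z - x) t := by
    intro t
    simpa [hγ] using ((hasDerivAt_id t).smul_const (z - x)).const_add x
  have hder : ∀ t : ℝ, HasDerivAt (fun s => u (γ s)) ((fderiv ℝ u (γ t)) (z - x)) t := by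
    intro t
    exact ((hdiff (γ t)).hasFDerivAt).comp_hasDerivAt t (hγd t)
  -- integrability of the derivative
  have hmeasγ : Continuous γ := by
    apply continuous_const.add (continuous_id.smul continuous_const)
  have hmeas : AEStronglyMeasurable (fun t : ℝ => (fderiv ℝ u (γ t)) (z - x))
      (volume.restrict (Set.Ioc (0:ℝ) 1)) := by
    have h1 : Measurable fun y => (fderiv ℝ u y) (z - x) :=
      (measurable_fderiv_apply_const ℝ u (z - x))
    exact (h1.comp hmeasγ.measurable).aestronglyMeasurable
  have hint : IntegrableOn (fun t : ℝ => (fderiv ℝ u (γ t)) (z - x)) (Set.Ioc (0:ℝ) 1) := by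
    refine ⟨hmeas, ?_⟩
    rw [HasFiniteIntegral]
    calc ∫⁻ t in Set.Ioc (0:ℝ) 1, (‖(fderiv ℝ u (γ t)) (z - x)‖₊ : ℝ≥0∞)
        ≤ ∫⁻ t in Set.Ioc (0:ℝ) 1, (‖fderiv ℝ u (γ t)‖₊ : ℝ≥0∞) * ‖z - x‖₊ := by
          refine lintegral_mono fun t => ?_
          rw [← ENNReal.coe_mul]
          exact ENNReal.coe_le_coe.2 ((fderiv ℝ u (γ t)).le_opNNNorm (z - x))
      _ < ∞ := by
          rw [lintegral_mul_const]
          · exact ENNReal.mul_lt_top (lt_of_le_of_ne le_top hfin) ENNReal.coe_lt_top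
          · exact ((measurable_fderiv ℝ u).nnnorm.coe_nnreal_ennreal.comp
              hmeasγ.measurable)
  have hii : IntervalIntegrable (fun t : ℝ => (fderiv ℝ u (γ t)) (z - x)) volume 0 1 := by
    rw [intervalIntegrable_iff_integrableOn_Ioc_of_le zero_le_one]
    exact hint
  have heq : u z - u x = ∫ t in (0:ℝ)..1, (fderiv ℝ u (γ t)) (z - x) := by
    have := intervalIntegral.integral_eq_sub_of_hasDerivAt
      (f := fun s => u (γ s)) (fun t _ => hder t) hii
    rw [this]
    simp [hγ]
  rw [heq, intervalIntegral.integral_of_le zero_le_one]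
  calc (‖∫ t in Set.Ioc (0:ℝ) 1, (fderiv ℝ u (γ t)) (z - x)‖₊ : ℝ≥0∞)
      ≤ ∫⁻ t in Set.Ioc (0:ℝ) 1, (‖(fderiv ℝ u (γ t)) (z - x)‖₊ : ℝ≥0∞) :=
        enorm_integral_le_lintegral_enorm _
    _ ≤ ∫⁻ t in Set.Ioc (0:ℝ) 1, (‖fderiv ℝ u (γ t)‖₊ : ℝ≥0∞) * ‖z - x‖₊ := by
        refine lintegral_mono fun t => ?_
        rw [← ENNReal.coe_mul]
        exact ENNReal.coe_le_coe.2 ((fderiv ℝ u (γ t)).le_opNNNorm (z - x))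
    _ = (∫⁻ t in Set.Ioc (0:ℝ) 1, (‖fderiv ℝ u (γ t)‖₊ : ℝ≥0∞)) * ‖z - x‖₊ := by
        rw [lintegral_mul_const]
        exact ((measurable_fderiv ℝ u).nnnorm.coe_nnreal_ennreal.comp hmeasγ.measurable)

/-- If the maximal function at `x` is at most `ε`, each ball average is at most `ε`. -/
lemma lintegral_ball_le_of_maxFn_le {n : ℕ} (g : EuclideanSpace ℝ (Fin n) → ℝ≥0∞)
    (x : EuclideanSpace ℝ (Fin n)) {ε : ℝ≥0∞} (hM : maxFn g x ≤ ε) {s : ℝ} (hs : 0 < s) :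
    ∫⁻ y in ball x s, g y ≤ ε * volume (ball x s) := by
  have h1 : (∫⁻ y in ball x s, g y) / volume (ball x s) ≤ ε :=
    le_trans (le_iSup₂_of_le s hs le_rfl) hM
  exact (ENNReal.div_le_iff (measure_ball_pos volume x hs).ne'
    (measure_ball_lt_top).ne).1 h1

/-- Change of variables estimate: the integral of `g` along the rescaled ball is controlled
by the maximal function at `x`. -/
lemma scaled_bound {n : ℕ} (g : EuclideanSpace ℝ (Fin n) → ℝ≥0∞) (hg : Measurable g)
    (x₀ x : EuclideanSpace ℝ (Fin n)) {r : ℝ} {ε : ℝ} (hr : 0 < r) (hε : 0 ≤ ε)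
    (hx : x ∈ ball x₀ r)
    (hM : maxFn g x ≤ ENNReal.ofReal ε) {t : ℝ} (ht : t ∈ Set.Ioc (0:ℝ) 1) :
    ∫⁻ z in ball x₀ r, g (x + t • (z - x)) ≤
      ENNReal.ofReal ε * ENNReal.ofReal (2 ^ n) * volume (ball x₀ r) := by
  have htpos : 0 < t := ht.1
  set c : EuclideanSpace ℝ (Fin n) := x - t • x with hc
  have hφ : ∀ z, x + t • (z - x) = t • z + c := by
    intro z; rw [hc, smul_sub]; abel
  set F : EuclideanSpace ℝ (Fin n) → ℝ≥0∞ := (ball x (2 * t * r)).indicator g with hF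
  have hFmeas : Measurable F := hg.indicator measurableSet_ball
  -- step 1: pointwise domination
  have step1 : ∫⁻ z in ball x₀ r, g (x + t • (z - x)) ≤ ∫⁻ z, F (t • z + c) := by
    rw [← lintegral_indicator measurableSet_ball]
    refine lintegral_mono fun z => ?_
    rcases em (z ∈ ball x₀ r) with hz | hz
    · rw [indicator_of_mem hz, ← hφ z, hF]
      have hmem : x + t • (z - x) ∈ ball x (2 * t * r) := by
        rw [mem_ball, dist_eq_norm]
        have : x + t • (z - x) - x = t • (z - x) := by abel
        rw [this, norm_smul, Real.norm_eq_abs, abs_of_pos htpos]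
        have hzx : ‖z - x‖ < 2 * r := by
          calc ‖z - x‖ ≤ ‖z - x₀‖ + ‖x₀ - x‖ := norm_sub_le_norm_sub_add_norm_sub z x₀ x
            _ < r + r := by
                rw [mem_ball, dist_eq_norm] at hz hx
                exact add_lt_add hz (by rwa [norm_sub_rev])
            _ = 2 * r := by ring
        calc t * ‖z - x‖ < t * (2 * r) := by
              exact mul_lt_mul_of_pos_left hzx htpos
          _ = 2 * t * r := by ring
      rw [indicator_of_mem hmem]
    · rw [indicator_of_notMem hz]; exact zero_le
  -- step 2: change of variables
  have step2 : ∫⁻ z, F (t • z + c) =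
      ENNReal.ofReal ((t ^ n)⁻¹) * ∫⁻ w in ball x (2 * t * r), g w := by
    have hmapsmul : Measure.map (t • ·) (volume : Measure (EuclideanSpace ℝ (Fin n))) =
        ENNReal.ofReal (|(t ^ n)⁻¹|) • volume := by
      have := Measure.map_addHaar_smul (volume : Measure (EuclideanSpace ℝ (Fin n))) htpos.ne'
      rwa [finrank_euclideanSpace_fin] at this
    have hf' : Measurable fun w : EuclideanSpace ℝ (Fin n) => F (w + c) :=
      hFmeas.comp (measurable_add_const c)
    have h1 : ∫⁻ z, F (t • z + c) ∂volume = ∫⁻ w, F (w + c) ∂(Measure.map (t • ·) volume) :=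
      (lintegral_map hf' (measurable_const_smul t)).symm
    rw [h1, hmapsmul, lintegral_smul_measure, lintegral_add_right_eq_self (fun w => F w) c,
      hF, lintegral_indicator measurableSet_ball, abs_of_pos (by positivity : (0:ℝ) < (t ^ n)⁻¹), smul_eq_mul]
  -- step 3: maximal function bound
  have h2tr : 0 < 2 * t * r := by positivity
  have step3 : ∫⁻ w in ball x (2 * t * r), g w ≤
      ENNReal.ofReal ε * volume (ball x (2 * t * r)) :=
    lintegral_ball_le_of_maxFn_le g x hM h2tr
  -- volume computation
  have hvol : volume (ball x (2 * t * r)) =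
      ENNReal.ofReal ((2 * t) ^ n) * volume (ball x₀ r) := by
    have := Measure.addHaar_ball_mul_of_pos (volume : Measure (EuclideanSpace ℝ (Fin n))) x
      (by positivity : (0:ℝ) < 2 * t) r
    rw [finrank_euclideanSpace_fin] at this
    rw [mul_assoc] at this ⊢
    rw [this, Measure.addHaar_ball_center volume x₀ r]
  calc ∫⁻ z in ball x₀ r, g (x + t • (z - x)) ≤ ∫⁻ z, F (t • z + c) := step1
    _ = ENNReal.ofReal ((t ^ n)⁻¹) * ∫⁻ w in ball x (2 * t * r), g w := step2
    _ ≤ ENNReal.ofReal ((t ^ n)⁻¹) * (ENNReal.ofReal ε *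
        (ENNReal.ofReal ((2 * t) ^ n) * volume (ball x₀ r))) := by
        rw [← hvol]; exact mul_le_mul_right step3 _
    _ = ENNReal.ofReal ε * ENNReal.ofReal (2 ^ n) * volume (ball x₀ r) := by
        rw [← mul_assoc, ← mul_assoc, ← ENNReal.ofReal_mul (by positivity),
          ← ENNReal.ofReal_mul (by positivity), ← ENNReal.ofReal_mul hε]
        congr 2
        rw [mul_pow]
        field_simp

/-- The difference between `u x` and the ball average is controlled. -/
lemma dist_average {n d : ℕ} (u : EuclideanSpace ℝ (Fin n) → EuclideanSpace ℝ (Fin d))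
    (hu : Integrable u)
    (x₀ x : EuclideanSpace ℝ (Fin n)) {r ε : ℝ} (hr : 0 < r) (hε : 0 ≤ ε)
    (hx : x ∈ ball x₀ r)
    (hftc : ∀ z : EuclideanSpace ℝ (Fin n), (‖u z - u x‖₊ : ℝ≥0∞) ≤
      (∫⁻ t in Set.Ioc (0:ℝ) 1, (‖fderiv ℝ u (x + t • (z - x))‖₊ : ℝ≥0∞)) * ‖z - x‖₊)
    (hscaled : ∀ t ∈ Set.Ioc (0:ℝ) 1,
      ∫⁻ z in ball x₀ r, (‖fderiv ℝ u (x + t • (z - x))‖₊ : ℝ≥0∞) ≤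
        ENNReal.ofReal ε * ENNReal.ofReal (2 ^ n) * volume (ball x₀ r)) :
    (‖u x - (volume (ball x₀ r)).toReal⁻¹ • ∫ z in ball x₀ r, u z‖₊ : ℝ≥0∞) ≤
      ENNReal.ofReal (ε * (2 ^ (n + 1) * r)) := by
  set g : EuclideanSpace ℝ (Fin n) → ℝ≥0∞ := fun y => (‖fderiv ℝ u y‖₊ : ℝ≥0∞) with hg
  have hgmeas : Measurable g := (measurable_fderiv ℝ u).nnnorm.coe_nnreal_ennreal
  set B := ball x₀ r with hB
  set V := volume B with hV
  have hV0 : V ≠ 0 := (measure_ball_pos volume x₀ hr).ne'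
  have hVt : V ≠ ∞ := measure_ball_lt_top.ne
  have hVtR : 0 < V.toReal := ENNReal.toReal_pos hV0 hVt
  -- representation of the difference with the average
  have hrepr : u x - V.toReal⁻¹ • ∫ z in B, u z = V.toReal⁻¹ • ∫ z in B, (u x - u z) := by
    have hcst : Integrable (fun _ : EuclideanSpace ℝ (Fin n) => u x) (volume.restrict B) :=
      integrableOn_const measure_ball_lt_top.ne enorm_ne_top
    have hur : Integrable u (volume.restrict B) := hu.restrict
    rw [integral_sub hcst hur,
      integral_const, smul_sub, measureReal_restrict_apply_univ, measureReal_def, ← hV, smul_smul,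
      inv_mul_cancel₀ hVtR.ne', one_smul]
  -- joint measurability
  have hjoint : Measurable fun p : EuclideanSpace ℝ (Fin n) × ℝ => g (x + p.2 • (p.1 - x)) := by
    apply hgmeas.comp
    exact (continuous_const.add (continuous_snd.smul
      (continuous_fst.sub continuous_const))).measurable
  have hinner : Measurable fun z : EuclideanSpace ℝ (Fin n) =>
      ∫⁻ t in Set.Ioc (0:ℝ) 1, g (x + t • (z - x)) :=
    Measurable.lintegral_prod_right hjoint
  -- main chain
  have chain : ∫⁻ z in B, (‖u x - u z‖₊ : ℝ≥0∞) ≤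
      ENNReal.ofReal (2 * r) * (ENNReal.ofReal ε * ENNReal.ofReal (2 ^ n) * V) := by
    calc ∫⁻ z in B, (‖u x - u z‖₊ : ℝ≥0∞)
        ≤ ∫⁻ z in B, (∫⁻ t in Set.Ioc (0:ℝ) 1, g (x + t • (z - x))) * ENNReal.ofReal (2 * r) := by
          refine setLIntegral_mono' measurableSet_ball fun z hz => ?_
          rw [show u x - u z = -(u z - u x) by abel, nnnorm_neg]
          refine le_trans (hftc z) (mul_le_mul_right ?_ _)
          have hzx : ‖z - x‖ ≤ 2 * r := by
            calc ‖z - x‖ ≤ ‖z - x₀‖ + ‖x₀ - x‖ := norm_sub_le_norm_sub_add_norm_sub z x₀ x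
              _ ≤ r + r := by
                  rw [mem_ball, dist_eq_norm] at hz hx
                  exact add_le_add hz.le (by rw [norm_sub_rev]; exact hx.le)
              _ = 2 * r := by ring
          rw [← enorm_eq_nnnorm, ← ofReal_norm_eq_enorm]
          exact ENNReal.ofReal_le_ofReal hzx
      _ = (∫⁻ z in B, ∫⁻ t in Set.Ioc (0:ℝ) 1, g (x + t • (z - x))) * ENNReal.ofReal (2 * r) :=
          lintegral_mul_const _ hinner
      _ = (∫⁻ t in Set.Ioc (0:ℝ) 1, ∫⁻ z in B, g (x + t • (z - x))) * ENNReal.ofReal (2 * r) := by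
          congr 1
          exact lintegral_lintegral_swap (hjoint.aemeasurable)
      _ ≤ (∫⁻ _ in Set.Ioc (0:ℝ) 1, ENNReal.ofReal ε * ENNReal.ofReal (2 ^ n) * V) *
            ENNReal.ofReal (2 * r) := by
          exact mul_le_mul_left (setLIntegral_mono' measurableSet_Ioc hscaled) _
      _ = ENNReal.ofReal (2 * r) * (ENNReal.ofReal ε * ENNReal.ofReal (2 ^ n) * V) := by
          rw [setLIntegral_const, Real.volume_Ioc]
          norm_num [mul_comm]
  -- conclude
  have hnorm : (‖u x - V.toReal⁻¹ • ∫ z in B, u z‖₊ : ℝ≥0∞) =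
      V⁻¹ * ‖∫ z in B, (u x - u z)‖₊ := by
    rw [hrepr, nnnorm_smul, ENNReal.coe_mul]
    congr 1
    rw [← enorm_eq_nnnorm, Real.enorm_eq_ofReal (inv_nonneg.2 hVtR.le), ENNReal.ofReal_inv_of_pos hVtR,
      ENNReal.ofReal_toReal hVt]
  calc (‖u x - V.toReal⁻¹ • ∫ z in B, u z‖₊ : ℝ≥0∞)
      = V⁻¹ * ‖∫ z in B, (u x - u z)‖₊ := hnorm
    _ ≤ V⁻¹ * ∫⁻ z in B, (‖u x - u z‖₊ : ℝ≥0∞) :=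
        mul_le_mul_right (enorm_integral_le_lintegral_enorm _) _
    _ ≤ V⁻¹ * (ENNReal.ofReal (2 * r) * (ENNReal.ofReal ε * ENNReal.ofReal (2 ^ n) * V)) :=
        mul_le_mul_right chain _
    _ = (V⁻¹ * V) * (ENNReal.ofReal (2 * r) * (ENNReal.ofReal ε * ENNReal.ofReal (2 ^ n))) := by
        ring
    _ = ENNReal.ofReal (2 * r) * ENNReal.ofReal ε * ENNReal.ofReal (2 ^ n) := by
        rw [ENNReal.inv_mul_cancel hV0 hVt, one_mul, mul_assoc]
    _ = ENNReal.ofReal (ε * (2 ^ (n + 1) * r)) := by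
        rw [← ENNReal.ofReal_mul (by positivity), ← ENNReal.ofReal_mul (by positivity)]
        congr 1
        ring

/-- Pointwise Lipschitz-type estimate for `W^{1,1}` maps: on any ball of radius `r`, the image
of the set where the maximal function of the gradient is `≤ ε` has diameter `≤ C_M ε r`. -/
theorem diam_image_le_of_maxFn_grad_le {n d : ℕ}
    (u : EuclideanSpace ℝ (Fin n) → EuclideanSpace ℝ (Fin d))
    (hdiff : Differentiable ℝ u)
    (hu : Integrable u)
    (hgrad : Integrable fun x => ‖fderiv ℝ u x‖) :
    ∃ C : ℝ, 0 < C ∧ ∀ (x₀ : EuclideanSpace ℝ (Fin n)) (r ε : ℝ), 0 < r → 0 < ε →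
      EMetric.diam (u '' {x | x ∈ Metric.ball x₀ r ∧
          maxFn (fun y => (‖fderiv ℝ u y‖₊ : ℝ≥0∞)) x ≤ ENNReal.ofReal ε})
        ≤ ENNReal.ofReal (C * ε * r) := by
  refine ⟨2 ^ (n + 2), by positivity, fun x₀ r ε hr hε => ?_⟩
  set g : EuclideanSpace ℝ (Fin n) → ℝ≥0∞ := fun y => (‖fderiv ℝ u y‖₊ : ℝ≥0∞) with hg
  have hgmeas : Measurable g := (measurable_fderiv ℝ u).nnnorm.coe_nnreal_ennreal
  set A : EuclideanSpace ℝ (Fin d) :=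
    (volume (ball x₀ r)).toReal⁻¹ • ∫ z in ball x₀ r, u z with hA
  apply EMetric.diam_le
  rintro p ⟨a, ⟨haB, haM⟩, rfl⟩ q ⟨b, ⟨hbB, hbM⟩, rfl⟩
  have ha : (‖u a - A‖₊ : ℝ≥0∞) ≤ ENNReal.ofReal (ε * (2 ^ (n + 1) * r)) :=
    dist_average u hu x₀ a hr hε.le haB (fun z => ftc_bound u hdiff a z)
      (fun t ht => scaled_bound g hgmeas x₀ a hr hε.le haB haM ht)
  have hb : (‖u b - A‖₊ : ℝ≥0∞) ≤ ENNReal.ofReal (ε * (2 ^ (n + 1) * r)) :=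
    dist_average u hu x₀ b hr hε.le hbB (fun z => ftc_bound u hdiff b z)
      (fun t ht => scaled_bound g hgmeas x₀ b hr hε.le hbB hbM ht)
  calc edist (u a) (u b) ≤ edist (u a) A + edist A (u b) := edist_triangle _ _ _
    _ = (‖u a - A‖₊ : ℝ≥0∞) + ‖u b - A‖₊ := by
        rw [edist_nndist, edist_comm, edist_nndist, nndist_eq_nnnorm, nndist_eq_nnnorm]
    _ ≤ ENNReal.ofReal (ε * (2 ^ (n + 1) * r)) + ENNReal.ofReal (ε * (2 ^ (n + 1) * r)) :=
        add_le_add ha hb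
    _ = ENNReal.ofReal (2 ^ (n + 2) * ε * r) := by
        rw [← ENNReal.ofReal_add (by positivity) (by positivity)]
        congr 1
        ring
end

section
/- Let 0 < α < n + 2 and let G_α be the Bessel kernel on ℝⁿ, defined by Ĝ_α(ξ) = (1 + 4π²|ξ|²)^{-α/2}. Then for each integer j ≥ 1 there is a constant C = C(α, n, j) such that |∇^j G_α(x)| ≤ C |x|^{α - n - j} for all x ≠ 0. -/
open MeasureTheory Set

open scoped ENNReal

namespace BesselKernelProofAux
/-- `exp (-x) ≤ N! / x^N` for `x > 0`. -/
lemma exp_neg_le (N : ℕ) {x : ℝ} (hx : 0 < x) :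
    Real.exp (-x) ≤ N.factorial * (x ^ N)⁻¹ := by
  have h1 : x ^ N / N.factorial ≤ Real.exp x := by
    have := Real.sum_le_exp_of_nonneg hx.le (N + 1)
    refine le_trans ?_ this
    have : x ^ N / (N.factorial : ℝ) ≤ ∑ i ∈ Finset.range (N + 1), x ^ i / i.factorial := by
      refine Finset.single_le_sum (f := fun i => x ^ i / (i.factorial : ℝ)) ?_
        (Finset.self_mem_range_succ N)
      intro i _
      positivity
    exact this
  rw [Real.exp_neg]
  have hxN : (0:ℝ) < x ^ N := by positivity
  have hfac : (0:ℝ) < N.factorial := by positivity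
  rw [inv_le_iff_one_le_mul₀ (by positivity)]
  calc (1:ℝ) = (x ^ N / N.factorial) * (N.factorial * (x^N)⁻¹) := by field_simp
  _ ≤ Real.exp x * (N.factorial * (x^N)⁻¹) :=
      mul_le_mul_of_nonneg_right h1 (by positivity)
  _ = N.factorial * (x^N)⁻¹ * Real.exp x := by ring

/-- main integrability: `t^c e^{-p/t} e^{-q t}` integrable on `(0,∞)` for `p, q > 0`. -/
lemma integrable_aux {c p q : ℝ} (hp : 0 < p) (hq : 0 < q) :
    IntegrableOn (fun t : ℝ => t ^ c * Real.exp (-p / t - q * t)) (Ioi 0) := by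
  have hmeas : ∀ (s : Set ℝ), s ⊆ Ioi 0 → MeasurableSet s →
      AEStronglyMeasurable (fun t : ℝ => t ^ c * Real.exp (-p / t - q * t))
        (volume.restrict s) := by
    intro s hs hsm
    apply ContinuousOn.aestronglyMeasurable ?_ hsm
    intro t ht
    have ht0 : t ≠ 0 := ne_of_gt (hs ht)
    exact ((Real.continuousAt_rpow_const t c (Or.inl ht0)).mul
      (((continuousAt_const.div continuousAt_id ht0).sub
        (continuousAt_const.mul continuousAt_id)).rexp)).continuousWithinAt
  have key : ∀ t : ℝ, 0 < t → t ^ c * Real.exp (-p / t - q * t)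
      = t ^ c * Real.exp (-(p / t)) * Real.exp (-(q * t)) := by
    intro t ht
    rw [mul_assoc, ← Real.exp_add]
    ring_nf
  rw [← Ioc_union_Ioi_eq_Ioi (zero_le_one (α := ℝ))]
  apply IntegrableOn.union
  · -- on (0,1] : bounded
    obtain ⟨N, hN⟩ := exists_nat_ge (-c)
    set M : ℝ := N.factorial * (p ^ N)⁻¹ with hM
    apply Integrable.mono' (g := fun _ => M)
      (integrableOn_const measure_Ioc_lt_top.ne)
      (hmeas _ Ioc_subset_Ioi_self measurableSet_Ioc)
    rw [ae_restrict_iff' measurableSet_Ioc]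
    refine Filter.Eventually.of_forall fun t ht => ?_
    obtain ⟨ht0, ht1⟩ := ht
    have h1 : t ^ c * Real.exp (-p / t - q * t)
        = t ^ c * Real.exp (-(p / t)) * Real.exp (-(q * t)) := key t ht0
    have hnn : 0 ≤ t ^ c * Real.exp (-p / t - q * t) := by positivity
    rw [Real.norm_of_nonneg hnn, h1]
    have h2 : Real.exp (-(p / t)) ≤ N.factorial * ((p / t) ^ N)⁻¹ :=
      exp_neg_le N (by positivity)
    have h3 : Real.exp (-(q * t)) ≤ 1 := Real.exp_le_one_iff.2 (neg_nonpos.2 (by positivity))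
    calc t ^ c * Real.exp (-(p / t)) * Real.exp (-(q * t))
        ≤ t ^ c * (N.factorial * ((p / t) ^ N)⁻¹) * 1 := by
          apply mul_le_mul (mul_le_mul_of_nonneg_left h2 (by positivity)) h3
            (by positivity) (by positivity)
      _ = N.factorial * (p ^ N)⁻¹ * (t ^ c * t ^ (N : ℝ)) := by
          rw [div_pow, ← Real.rpow_natCast t N]
          field_simp
      _ ≤ M := by
          rw [hM]
          have : t ^ c * t ^ (N:ℝ) = t ^ (c + N) := (Real.rpow_add ht0 _ _).symm
          rw [this]
          have h4 : t ^ (c + (N:ℝ)) ≤ 1 := by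
            apply Real.rpow_le_one ht0.le ht1 (by linarith)
          exact mul_le_of_le_one_right (by positivity) h4
  · -- on (1,∞)
    obtain ⟨N, hN⟩ := exists_nat_ge c
    set M : ℝ := N.factorial * ((q/2) ^ N)⁻¹ with hM
    apply Integrable.mono' (g := fun t => M * Real.exp (-(q/2) * t))
      ((exp_neg_integrableOn_Ioi 1 (by positivity)).const_mul M)
      (hmeas _ (Ioi_subset_Ioi zero_le_one) measurableSet_Ioi)
    rw [ae_restrict_iff' measurableSet_Ioi]
    refine Filter.Eventually.of_forall fun t ht => ?_
    have ht1 : (1:ℝ) < t := ht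
    have ht0 : (0:ℝ) < t := lt_trans one_pos ht1
    have hnn : 0 ≤ t ^ c * Real.exp (-p / t - q * t) := by positivity
    rw [Real.norm_of_nonneg hnn, key t ht0]
    have h2 : Real.exp (-(p / t)) ≤ 1 := Real.exp_le_one_iff.2 (neg_nonpos.2 (by positivity))
    have h5 : Real.exp (-(q * t)) = Real.exp (-(q/2 * t)) * Real.exp (-(q/2 * t)) := by
      rw [← Real.exp_add]; ring_nf
    have h6 : t ^ c ≤ t ^ (N : ℝ) :=
      Real.rpow_le_rpow_of_exponent_le ht1.le hN
    have h7 : Real.exp (-(q/2 * t)) ≤ N.factorial * ((q/2 * t) ^ N)⁻¹ :=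
      exp_neg_le N (by positivity)
    calc t ^ c * Real.exp (-(p / t)) * Real.exp (-(q * t))
        ≤ t ^ (N:ℝ) * 1 * Real.exp (-(q * t)) := by
          apply mul_le_mul_of_nonneg_right
            (mul_le_mul h6 h2 (Real.exp_nonneg _) (by positivity)) (Real.exp_nonneg _)
      _ = t ^ (N:ℝ) * Real.exp (-(q/2 * t)) * Real.exp (-(q/2 * t)) := by
          rw [h5]; ring
      _ ≤ t ^ (N:ℝ) * (N.factorial * ((q/2 * t) ^ N)⁻¹) * Real.exp (-(q/2 * t)) := by
          apply mul_le_mul_of_nonneg_right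
            (mul_le_mul_of_nonneg_left h7 (by positivity)) (Real.exp_nonneg _)
      _ = M * Real.exp (-(q/2) * t) := by
          rw [hM, Real.rpow_natCast, mul_pow]
          have : (t:ℝ) ^ N ≠ 0 := by positivity
          field_simp



/-- integrability of `t^c e^{-p/t}` on `(0,∞)` for `c < -1`, `p > 0`. -/
lemma integrable_aux2 {c p : ℝ} (hc : c < -1) (hp : 0 < p) :
    IntegrableOn (fun t : ℝ => t ^ c * Real.exp (-p / t)) (Ioi 0) := by
  have hmeas : ∀ (s : Set ℝ), s ⊆ Ioi 0 → MeasurableSet s →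
      AEStronglyMeasurable (fun t : ℝ => t ^ c * Real.exp (-p / t))
        (volume.restrict s) := by
    intro s hs hsm
    apply ContinuousOn.aestronglyMeasurable ?_ hsm
    intro t ht
    have ht0 : t ≠ 0 := ne_of_gt (hs ht)
    exact ((Real.continuousAt_rpow_const t c (Or.inl ht0)).mul
      ((continuousAt_const.div continuousAt_id ht0).rexp)).continuousWithinAt
  rw [← Ioc_union_Ioi_eq_Ioi (zero_le_one (α := ℝ))]
  apply IntegrableOn.union
  · obtain ⟨N, hN⟩ := exists_nat_ge (-c)
    set M : ℝ := N.factorial * (p ^ N)⁻¹ with hM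
    apply Integrable.mono' (g := fun _ => M)
      (integrableOn_const measure_Ioc_lt_top.ne)
      (hmeas _ Ioc_subset_Ioi_self measurableSet_Ioc)
    rw [ae_restrict_iff' measurableSet_Ioc]
    refine Filter.Eventually.of_forall fun t ht => ?_
    obtain ⟨ht0, ht1⟩ := ht
    have hnn : 0 ≤ t ^ c * Real.exp (-p / t) := by positivity
    rw [Real.norm_of_nonneg hnn, neg_div, hM]
    have h2 : Real.exp (-(p / t)) ≤ N.factorial * ((p / t) ^ N)⁻¹ :=
      exp_neg_le N (by positivity)
    calc t ^ c * Real.exp (-(p / t))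
        ≤ t ^ c * (N.factorial * ((p / t) ^ N)⁻¹) :=
          mul_le_mul_of_nonneg_left h2 (by positivity)
      _ = N.factorial * (p ^ N)⁻¹ * (t ^ c * t ^ (N : ℝ)) := by
          rw [div_pow, ← Real.rpow_natCast t N]
          field_simp
      _ ≤ N.factorial * (p ^ N)⁻¹ := by
          rw [← Real.rpow_add ht0]
          exact mul_le_of_le_one_right (by positivity)
            (Real.rpow_le_one ht0.le ht1 (by linarith))
  · apply Integrable.mono' (g := fun t : ℝ => t ^ c)
      (integrableOn_Ioi_rpow_of_lt hc one_pos)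
      (hmeas _ (Ioi_subset_Ioi zero_le_one) measurableSet_Ioi)
    rw [ae_restrict_iff' measurableSet_Ioi]
    refine Filter.Eventually.of_forall fun t ht => ?_
    have ht0 : (0:ℝ) < t := lt_trans one_pos ht
    have hnn : 0 ≤ t ^ c * Real.exp (-p / t) := by positivity
    rw [Real.norm_of_nonneg hnn]
    have h2 : Real.exp (-p / t) ≤ 1 := by
      rw [neg_div]
      exact Real.exp_le_one_iff.2 (neg_nonpos.2 (by positivity))
    exact mul_le_of_le_one_right (by positivity) h2

/-- the constant. -/
noncomputable def K (c : ℝ) : ℝ := ∫ u in Ioi (0:ℝ), u ^ c * Real.exp (-1 / u)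

lemma K_integrable {c : ℝ} (hc : c < -1) :
    IntegrableOn (fun u : ℝ => u ^ c * Real.exp (-1 / u)) (Ioi 0) :=
  integrable_aux2 hc one_pos

lemma K_pos {c : ℝ} (hc : c < -1) : 0 < K c := by
  rw [K]
  have hnn : 0 ≤ᶠ[ae (volume.restrict (Ioi (0:ℝ)))]
      fun u : ℝ => u ^ c * Real.exp (-1 / u) := by
    filter_upwards [ae_restrict_mem measurableSet_Ioi] with t ht
    have : (0:ℝ) < t := ht
    positivity
  rw [setIntegral_pos_iff_support_of_nonneg_ae hnn (K_integrable hc)]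
  have hsub : Ioi (0:ℝ) ⊆ Function.support (fun u : ℝ => u ^ c * Real.exp (-1 / u)) ∩ Ioi 0 := by
    intro t ht
    have ht0 : (0:ℝ) < t := ht
    refine ⟨?_, ht⟩
    simp only [Function.mem_support]
    positivity
  calc (0:ℝ≥0∞) < volume (Ioi (0:ℝ)) := by simp [Real.volume_Ioi]
  _ ≤ _ := measure_mono hsub

lemma K_nonneg {c : ℝ} : 0 ≤ K c := by
  apply integral_nonneg_of_ae
  filter_upwards [ae_restrict_mem measurableSet_Ioi] with t ht
  have : (0:ℝ) < t := ht
  positivity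

/-- change of variables. -/
lemma integral_eq {c p : ℝ} (hp : 0 < p) :
    ∫ t in Ioi (0:ℝ), t ^ c * Real.exp (-p / t) = p ^ (c + 1) * K c := by
  have h := MeasureTheory.integral_comp_mul_left_Ioi
    (fun t : ℝ => t ^ c * Real.exp (-p / t)) 0 hp
  rw [mul_zero] at h
  have h2 : ∫ u in Ioi (0:ℝ), (p * u) ^ c * Real.exp (-p / (p * u))
      = p ^ c * ∫ u in Ioi (0:ℝ), u ^ c * Real.exp (-1 / u) := by
    rw [← integral_const_mul]
    apply setIntegral_congr_fun measurableSet_Ioi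
    intro u hu
    have hu0 : (0:ℝ) < u := hu
    show (p * u) ^ c * Real.exp (-p / (p * u)) = p ^ c * (u ^ c * Real.exp (-1 / u))
    have h3 : (p * u) ^ c = p ^ c * u ^ c := Real.mul_rpow hp.le hu0.le
    have h4 : -p / (p * u) = -1 / u := by field_simp
    rw [h3, h4]
    ring
  rw [h2, smul_eq_mul] at h
  rw [Real.rpow_add_one hp.ne', K]
  have hp' : p⁻¹ ≠ 0 := inv_ne_zero hp.ne'
  field_simp at h
  simp only [neg_div] at h ⊢
  rw [← h]; ring


/-- The family of radial integrals. -/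
noncomputable def J (γ s : ℝ) : ℝ :=
  ∫ t in Ioi (0:ℝ), t ^ γ * Real.exp (-Real.pi * s / t - t / (4 * Real.pi)) / t

lemma J_integrand_meas (γ s : ℝ) :
    AEStronglyMeasurable
      (fun t : ℝ => t ^ γ * Real.exp (-Real.pi * s / t - t / (4 * Real.pi)) / t)
      (volume.restrict (Ioi 0)) := by
  apply ContinuousOn.aestronglyMeasurable ?_ measurableSet_Ioi
  intro t ht
  have ht0 : t ≠ 0 := ne_of_gt ht
  exact (((Real.continuousAt_rpow_const t γ (Or.inl ht0)).mul
    (((continuousAt_const.div continuousAt_id ht0).sub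
      (continuousAt_id.div continuousAt_const (by positivity))).rexp)).div
    continuousAt_id ht0).continuousWithinAt

/-- integrand of `J` is integrable for `s > 0`. -/
lemma J_integrable {γ s : ℝ} (hs : 0 < s) :
    IntegrableOn
      (fun t : ℝ => t ^ γ * Real.exp (-Real.pi * s / t - t / (4 * Real.pi)) / t)
      (Ioi 0) := by
  apply Integrable.congr (integrable_aux (c := γ - 1) (p := Real.pi * s)
    (q := 1 / (4 * Real.pi)) (by positivity) (by positivity))
  filter_upwards [ae_restrict_mem measurableSet_Ioi] with t ht
  have ht0 : (0:ℝ) < t := ht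
  rw [Real.rpow_sub_one ht0.ne']
  have : -(Real.pi * s) / t - 1 / (4 * Real.pi) * t = -Real.pi * s / t - t / (4 * Real.pi) := by
    ring
  rw [this]
  ring

/-- pointwise bound: `|J γ s| ≤ (π s)^γ K (γ - 2 + 1)` for `γ < 0 < s`. -/
lemma J_bound {γ s : ℝ} (hγ : γ < 0) (hs : 0 < s) :
    |J γ s| ≤ (Real.pi * s) ^ γ * K (γ - 1) := by
  have h1 : |J γ s| ≤ ∫ t in Ioi (0:ℝ), t ^ (γ-1) * Real.exp (-(Real.pi * s) / t) := by
    rw [← Real.norm_eq_abs]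
    apply norm_integral_le_of_norm_le (integrable_aux2 (by linarith) (by positivity))
    filter_upwards [ae_restrict_mem measurableSet_Ioi] with t ht
    have ht0 : (0:ℝ) < t := ht
    have hnn : 0 ≤ t ^ γ * Real.exp (-Real.pi * s / t - t / (4 * Real.pi)) / t := by
      positivity
    rw [Real.norm_of_nonneg hnn, Real.rpow_sub_one ht0.ne']
    rw [div_mul_eq_mul_div, div_le_div_iff_of_pos_right ht0]
    apply mul_le_mul_of_nonneg_left ?_ (by positivity)
    apply Real.exp_le_exp.2
    have : (0:ℝ) < 4 * Real.pi := by positivity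
    have h2 : -(Real.pi * s) / t = -Real.pi * s / t := by ring
    rw [h2]
    nlinarith [div_pos ht0 this]
  rw [integral_eq (by positivity)] at h1
  calc |J γ s| ≤ (Real.pi * s) ^ (γ - 1 + 1) * K (γ - 1) := h1
  _ = (Real.pi * s) ^ γ * K (γ - 1) := by norm_num

/-- derivative of `J` in `s`. -/
lemma J_hasDerivAt {γ s : ℝ} (hs : 0 < s) :
    HasDerivAt (J γ) (-Real.pi * J (γ - 1) s) s := by
  have hπ : (0:ℝ) < Real.pi := Real.pi_pos
  set F : ℝ → ℝ → ℝ := fun s t => t ^ γ * Real.exp (-Real.pi * s / t - t / (4 * Real.pi)) / t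
  set F' : ℝ → ℝ → ℝ := fun s t =>
    -Real.pi * (t ^ (γ - 1) * Real.exp (-Real.pi * s / t - t / (4 * Real.pi)) / t)
  have key := hasDerivAt_integral_of_dominated_loc_of_deriv_le
    (μ := volume.restrict (Ioi 0)) (F := F) (F' := F')
    (x₀ := s) (s := Metric.ball s (s / 2))
    (bound := fun t => Real.pi * (t ^ (γ - 2) * Real.exp (-(Real.pi * (s/2)) / t - 1/(4 * Real.pi) * t)))
    (Metric.ball_mem_nhds s (by positivity))
    (Filter.Eventually.of_forall fun s' => J_integrand_meas γ s')
    (J_integrable hs)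
    ((J_integrand_meas (γ - 1) s).const_mul _)
    ?bound ?bint ?diff
  case bound =>
    filter_upwards [ae_restrict_mem measurableSet_Ioi] with t ht
    intro s' hs'
    have ht0 : (0:ℝ) < t := ht
    have hs2 : s / 2 ≤ s' := by
      rw [Metric.mem_ball, Real.dist_eq, abs_lt] at hs'
      linarith
    have hnn : (0:ℝ) ≤ t ^ (γ-1) * Real.exp (-Real.pi * s' / t - t / (4 * Real.pi)) / t := by
      positivity
    simp only [F', norm_mul, Real.norm_of_nonneg hnn]
    rw [norm_neg, Real.norm_of_nonneg hπ.le]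
    apply mul_le_mul_of_nonneg_left ?_ hπ.le
    have hexp : Real.exp (-Real.pi * s' / t - t / (4 * Real.pi))
        ≤ Real.exp (-(Real.pi * (s/2)) / t - 1/(4 * Real.pi) * t) := by
      apply Real.exp_le_exp.2
      have h3 : -(Real.pi * (s/2)) / t - 1/(4 * Real.pi) * t
          = -Real.pi * (s/2) / t - t / (4 * Real.pi) := by ring
      rw [h3]
      have : -Real.pi * s' / t ≤ -Real.pi * (s/2) / t := by
        apply div_le_div_of_nonneg_right ?_ ht0.le
        nlinarith
      linarith
    calc t ^ (γ-1) * Real.exp (-Real.pi * s' / t - t / (4 * Real.pi)) / t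
        = t ^ (γ-2) * Real.exp (-Real.pi * s' / t - t / (4 * Real.pi)) := by
          rw [show γ - 1 = γ - 2 + 1 by ring, Real.rpow_add_one ht0.ne']
          field_simp
      _ ≤ t ^ (γ-2) * Real.exp (-(Real.pi * (s/2)) / t - 1/(4 * Real.pi) * t) :=
          mul_le_mul_of_nonneg_left hexp (by positivity)
  case bint =>
    exact (integrable_aux (by positivity) (by positivity)).const_mul _
  case diff =>
    filter_upwards [ae_restrict_mem measurableSet_Ioi] with t ht
    intro s' _
    have ht0 : (0:ℝ) < t := ht
    have hlin : HasDerivAt (fun u : ℝ => -Real.pi * u / t - t / (4 * Real.pi))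
        (-Real.pi / t) s' := by
      have h1 : HasDerivAt (fun u : ℝ => -Real.pi * u) (-Real.pi) s' := by
        simpa using (hasDerivAt_id s').const_mul (-Real.pi)
      exact (h1.div_const t).sub_const _
    have hexp := hlin.exp
    have h2 := (hexp.const_mul (t ^ γ)).div_const t
    convert h2 using 1
    · rfl
    simp only [F']
    rw [Real.rpow_sub_one ht0.ne']
    field_simp
  have h4 : ∫ t in Ioi (0:ℝ), F' s t = -Real.pi * J (γ - 1) s := by
    rw [J, ← integral_const_mul]
  exact h4 ▸ key.2



lemma J_contDiffOn (m : ℕ) (γ : ℝ) : ContDiffOn ℝ m (J γ) (Ioi 0) := by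
  induction m generalizing γ with
  | zero =>
    simp only [Nat.cast_zero, contDiffOn_zero]
    exact fun s hs => (J_hasDerivAt (γ := γ) hs).continuousAt.continuousWithinAt
  | succ m ih =>
    have hcast : ((m + 1 : ℕ) : WithTop ℕ∞) = (m : WithTop ℕ∞) + 1 := by norm_cast
    rw [hcast, contDiffOn_succ_iff_derivWithin (isOpen_Ioi.uniqueDiffOn)]
    refine ⟨fun s hs => ((J_hasDerivAt (γ := γ) hs).differentiableAt).differentiableWithinAt,
      ?_, ?_⟩
    · intro h
      exfalso
      exact (WithTop.natCast_ne_top m) h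
    · apply ContDiffOn.congr ((ih (γ - 1)).const_smul (-Real.pi))
      intro s hs
      rw [derivWithin_of_isOpen isOpen_Ioi hs]
      rw [(J_hasDerivAt hs).deriv]
      simp

/-- iterated derivative of the scaled function. -/
lemma iteratedDeriv_scaled (A c γ : ℝ) (hc : 0 < c) (k : ℕ) :
    ∀ s : ℝ, 0 < s → iteratedDeriv k (fun u => A * J γ (c * u)) s
      = A * (-Real.pi * c) ^ k * J (γ - k) (c * s) := by
  induction k with
  | zero => intro s _; simp
  | succ k ih =>
    intro s hs
    rw [iteratedDeriv_succ]
    have hev : iteratedDeriv k (fun u => A * J γ (c * u))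
        =ᶠ[nhds s] (fun u => A * (-Real.pi * c) ^ k * J (γ - k) (c * u)) := by
      filter_upwards [isOpen_Ioi.mem_nhds hs] with u hu
      exact ih u hu
    rw [hev.deriv_eq]
    have hJ : HasDerivAt (J (γ - k)) (-Real.pi * J (γ - k - 1) (c * s)) (c * s) :=
      J_hasDerivAt (by positivity)
    have hlin : HasDerivAt (fun u : ℝ => c * u) c s := by
      simpa using (hasDerivAt_id s).const_mul c
    have hcomp : HasDerivAt (fun u => J (γ - k) (c * u))
        (-Real.pi * J (γ - k - 1) (c * s) * c) s := HasDerivAt.comp s hJ hlin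
    have := (hcomp.const_mul (A * (-Real.pi * c) ^ k)).deriv
    rw [this]
    have hγ : γ - (k + 1 : ℕ) = γ - k - 1 := by push_cast; ring
    rw [hγ]
    ring

/-- for `k ≥ 1`, subtracting a constant does not change iterated derivatives. -/
lemma iteratedDeriv_sub_const (f : ℝ → ℝ) (d : ℝ) (k : ℕ) (hk : 1 ≤ k) :
    iteratedDeriv k (fun u => f u - d) = iteratedDeriv k f := by
  obtain ⟨k', rfl⟩ := Nat.exists_eq_add_of_le hk
  rw [add_comm]
  rw [iteratedDeriv_succ', iteratedDeriv_succ']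
  have : (deriv fun u => f u - d) = deriv f := funext fun u => deriv_sub_const d
  rw [this]

section INNER
variable {E : Type*} [NormedAddCommGroup E] [InnerProductSpace ℝ E]

lemma norm_itFD_id_le (k : ℕ) (x : E) (hx : ‖x‖ ≤ 1) :
    ‖iteratedFDeriv ℝ k (fun y : E => y) x‖ ≤ 1 := by
  match k with
  | 0 => rw [norm_iteratedFDeriv_zero]; exact hx
  | 1 =>
    rw [← norm_iteratedFDeriv_fderiv]
    rw [norm_iteratedFDeriv_zero]
    have : fderiv ℝ (fun y : E => y) x = ContinuousLinearMap.id ℝ E := fderiv_id'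
    rw [this]
    exact ContinuousLinearMap.norm_id_le
  | (k + 2) =>
    rw [← norm_iteratedFDeriv_fderiv]
    have h1 : (fderiv ℝ (fun y : E => y)) = fun _ : E => ContinuousLinearMap.id ℝ E :=
      funext fun y => fderiv_id'
    rw [h1, iteratedFDeriv_const_of_ne (Nat.succ_ne_zero k)]
    simp

lemma norm_itFD_normsq_le (i : ℕ) (x : E) (hx : ‖x‖ ≤ 1) :
    ‖iteratedFDeriv ℝ i (fun y : E => ‖y‖ ^ 2) x‖ ≤ 2 ^ i := by
  have hq : (fun y : E => ‖y‖ ^ 2) = fun y : E => (innerSL ℝ) y y := by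
    funext y
    rw [innerSL_apply_apply, real_inner_self_eq_norm_sq]
  rw [hq]
  have h := (innerSL ℝ (E := E)).norm_iteratedFDeriv_le_of_bilinear
    (f := fun y : E => y) (g := fun y : E => y) (N := (⊤ : WithTop ℕ∞))
    contDiff_id contDiff_id x (n := i) le_top
  apply h.trans
  have hsum : ∑ i' ∈ Finset.range (i + 1), (i.choose i' : ℝ) *
      ‖iteratedFDeriv ℝ i' (fun y : E => y) x‖ *
      ‖iteratedFDeriv ℝ (i - i') (fun y : E => y) x‖ ≤ 2 ^ i := by
    calc ∑ i' ∈ Finset.range (i + 1), (i.choose i' : ℝ) *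
        ‖iteratedFDeriv ℝ i' (fun y : E => y) x‖ *
        ‖iteratedFDeriv ℝ (i - i') (fun y : E => y) x‖
        ≤ ∑ i' ∈ Finset.range (i + 1), (i.choose i' : ℝ) := by
          apply Finset.sum_le_sum
          intro i' _
          calc (i.choose i' : ℝ) * ‖iteratedFDeriv ℝ i' (fun y : E => y) x‖ *
              ‖iteratedFDeriv ℝ (i - i') (fun y : E => y) x‖
              ≤ (i.choose i' : ℝ) * 1 * 1 := by
                apply mul_le_mul (mul_le_mul_of_nonneg_left
                  (norm_itFD_id_le i' x hx) (by positivity))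
                  (norm_itFD_id_le (i - i') x hx) (norm_nonneg _) (by positivity)
          _ = (i.choose i' : ℝ) := by ring
      _ = 2 ^ i := by
          rw [← Nat.cast_sum]
          rw [Nat.sum_range_choose]
          norm_num
  calc ‖innerSL ℝ (E := E)‖ * ∑ i' ∈ Finset.range (i + 1), (i.choose i' : ℝ) *
      ‖iteratedFDeriv ℝ i' (fun y : E => y) x‖ *
      ‖iteratedFDeriv ℝ (i - i') (fun y : E => y) x‖
      ≤ 1 * (2 ^ i) := by
        apply mul_le_mul (norm_innerSL_le ℝ) hsum ?_ zero_le_one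
        positivity
    _ = 2 ^ i := one_mul _

lemma norm_itFDW_add_const {F : Type*} [NormedAddCommGroup F] [NormedSpace ℝ F]
    {f : F → ℝ} {d : ℝ} {s : Set F} (hs : UniqueDiffOn ℝ s) {x : F} (hx : x ∈ s) (m : ℕ) :
    ‖iteratedFDerivWithin ℝ (m + 1) (fun y => f y + d) s x‖
      = ‖iteratedFDerivWithin ℝ (m + 1) f s x‖ := by
  rw [iteratedFDerivWithin_succ_eq_comp_right hs hx,
    iteratedFDerivWithin_succ_eq_comp_right hs hx]
  simp only [Function.comp_apply, LinearIsometryEquiv.norm_map]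
  congr 1
  apply iteratedFDerivWithin_congr ?_ hx
  intro y hy
  exact fderivWithin_add_const d
end INNER

section SMUL
variable {E : Type*} [NormedAddCommGroup E] [NormedSpace ℝ E] [FiniteDimensional ℝ E]

noncomputable def smulCLE (r : ℝ) (hr : r ≠ 0) : E ≃L[ℝ] E :=
  (LinearEquiv.smulOfNeZero ℝ E r hr).toContinuousLinearEquiv

lemma smulCLE_apply (r : ℝ) (hr : r ≠ 0) (z : E) : smulCLE r hr z = r • z := rfl

lemma smulCLE_symm_apply (r : ℝ) (hr : r ≠ 0) (z : E) :
    (smulCLE r hr).symm z = r⁻¹ • z := by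
  apply (smulCLE r hr).injective
  rw [ContinuousLinearEquiv.apply_symm_apply, smulCLE_apply, smul_smul,
    mul_inv_cancel₀ hr, one_smul]

lemma smulCLE_symm_norm_le (r : ℝ) (hr : 0 < r) :
    ‖((smulCLE r hr.ne' : E ≃L[ℝ] E).symm : E →L[ℝ] E)‖ ≤ r⁻¹ := by
  apply ContinuousLinearMap.opNorm_le_bound _ (by positivity)
  intro z
  rw [ContinuousLinearEquiv.coe_coe, smulCLE_symm_apply, norm_smul]
  rw [norm_inv, Real.norm_of_nonneg hr.le]
end SMUL

end BesselKernelProofAux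

open BesselKernelProofAux in
/-- Derivative bounds for the Bessel kernel `G_α` (defined by its radial integral formula,
with normalizing constant `a > 0`): `|∇^j G_α(x)| ≤ C |x|^{α - n - j}` when `0 < α < n + 2`. -/
theorem besselKernel_iteratedFDeriv_bound {n : ℕ} (α : ℝ) (hα0 : 0 < α) (hα : α < n + 2)
    (a : ℝ) (ha : 0 < a) (G : EuclideanSpace ℝ (Fin n) → ℝ)
    (hG : ∀ x, G x = a * ∫ t in Set.Ioi (0 : ℝ),
      t ^ ((α - n) / 2) * Real.exp (-Real.pi * ‖x‖ ^ 2 / t - t / (4 * Real.pi)) / t)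
    (j : ℕ) (hj : 1 ≤ j) :
    ∃ C : ℝ, 0 < C ∧ ∀ x : EuclideanSpace ℝ (Fin n), x ≠ 0 →
      ‖iteratedFDeriv ℝ j G x‖ ≤ C * ‖x‖ ^ (α - n - j) := by
  have hπ : (0:ℝ) < Real.pi := Real.pi_pos
  set β : ℝ := (α - n) / 2 with hβdef
  have hβ : β < 1 := by rw [hβdef]; linarith
  have hGJ : ∀ x : EuclideanSpace ℝ (Fin n), G x = a * J β (‖x‖ ^ 2) := by
    intro x; rw [hG x]; rfl
  set Ksum : ℝ := ∑ i ∈ Finset.Icc 1 j, K (β - i - 1) with hKsumdef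
  have hKnn : ∀ i : ℕ, i ∈ Finset.Icc 1 j → 0 ≤ K (β - i - 1) := fun i _ => K_nonneg
  have hKsum_nonneg : 0 ≤ Ksum := Finset.sum_nonneg hKnn
  have hKsum_pos : 0 < Ksum := by
    apply Finset.sum_pos' hKnn
    refine ⟨1, Finset.mem_Icc.2 ⟨le_refl 1, hj⟩, K_pos ?_⟩
    push_cast; linarith
  have hπβ : (0:ℝ) < Real.pi ^ β := Real.rpow_pos_of_pos hπ β
  refine ⟨j.factorial * (a * Real.pi ^ β * Ksum) * 2 ^ j, ?_, ?_⟩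
  · have h1 : (0:ℝ) < j.factorial := by exact_mod_cast j.factorial_pos
    positivity
  intro x hx
  set r : ℝ := ‖x‖ with hrdef
  have hr : 0 < r := norm_pos_iff.2 hx
  set c : ℝ := r ^ 2 with hcdef
  have hc : 0 < c := by positivity
  set e : EuclideanSpace ℝ (Fin n) ≃L[ℝ] EuclideanSpace ℝ (Fin n) := smulCLE r hr.ne'
    with hedef
  set y₀ : EuclideanSpace ℝ (Fin n) := e.symm x with hy₀def
  have hy₀ : ‖y₀‖ = 1 := by
    rw [hy₀def, hedef, smulCLE_symm_apply, norm_smul, norm_inv, Real.norm_of_nonneg hr.le,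
      ← hrdef, inv_mul_cancel₀ hr.ne']
  set g' : ℝ → ℝ := fun u => a * J β (c * u) - a * J β c with hg'def
  set q : EuclideanSpace ℝ (Fin n) → ℝ := fun y => ‖y‖ ^ 2 with hqdef
  set s : Set (EuclideanSpace ℝ (Fin n)) := Metric.ball y₀ 2⁻¹ with hsdef
  have hy₀s : y₀ ∈ s := Metric.mem_ball_self (by norm_num)
  have hsu : UniqueDiffOn ℝ s := Metric.isOpen_ball.uniqueDiffOn
  have htu : UniqueDiffOn ℝ (Ioi (0:ℝ)) := isOpen_Ioi.uniqueDiffOn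
  -- the rewriting of G
  obtain ⟨d, hGeq⟩ : ∃ d : ℝ,
      G = (fun y => g' (q y) + d) ∘ ⇑(e.symm) := by
    refine ⟨G x, ?_⟩
    funext z
    simp only [Function.comp_apply, hg'def, hqdef]
    rw [hedef, smulCLE_symm_apply]
    have h1 : c * ‖(r⁻¹ : ℝ) • z‖ ^ 2 = ‖z‖ ^ 2 := by
      rw [norm_smul, norm_inv, Real.norm_of_nonneg hr.le, hcdef]
      field_simp
    rw [h1, hGJ z, hGJ x, ← hrdef, ← hcdef]
    ring
  -- step 1 : within an open set
  have hSopen : IsOpen (⇑(e.symm) ⁻¹' s) := Metric.isOpen_ball.preimage e.symm.continuous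
  have hxS : x ∈ ⇑(e.symm) ⁻¹' s := by
    simp only [mem_preimage, ← hy₀def]; exact hy₀s
  have step1 : ‖iteratedFDeriv ℝ j G x‖ = ‖iteratedFDerivWithin ℝ j G (⇑(e.symm) ⁻¹' s) x‖ :=
    (congrArg norm ((iteratedFDerivWithin_of_isOpen j hSopen) hxS)).symm
  have step2 : iteratedFDerivWithin ℝ j G (⇑(e.symm) ⁻¹' s) x
      = (iteratedFDerivWithin ℝ j (fun y => g' (q y) + d) s y₀).compContinuousLinearMap
          (fun _ => (e.symm : EuclideanSpace ℝ (Fin n) →L[ℝ] EuclideanSpace ℝ (Fin n))) := by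
    conv_lhs => rw [hGeq]
    rw [hy₀def]
    exact ContinuousLinearEquiv.iteratedFDerivWithin_comp_right e.symm _ hsu
      (by rw [← hy₀def]; exact hy₀s) j
  have step3 : ‖iteratedFDerivWithin ℝ j G (⇑(e.symm) ⁻¹' s) x‖
      ≤ ‖iteratedFDerivWithin ℝ j (fun y => g' (q y) + d) s y₀‖ * r⁻¹ ^ j := by
    rw [step2]
    refine (ContinuousMultilinearMap.norm_compContinuousLinearMap_le _ _).trans ?_
    apply mul_le_mul_of_nonneg_left ?_ (norm_nonneg _)
    calc ∏ _i : Fin j, ‖(e.symm : EuclideanSpace ℝ (Fin n) →L[ℝ] EuclideanSpace ℝ (Fin n))‖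
        ≤ ∏ _i : Fin j, r⁻¹ := by
          apply Finset.prod_le_prod (fun _ _ => norm_nonneg _)
          intro i _
          rw [hedef]
          exact smulCLE_symm_norm_le r hr
      _ = r⁻¹ ^ j := by rw [Finset.prod_const, Finset.card_fin]
  obtain ⟨m, hm⟩ : ∃ m, j = m + 1 := ⟨j - 1, (Nat.succ_pred_eq_of_pos hj).symm⟩
  have step4 : ‖iteratedFDerivWithin ℝ j (fun y => g' (q y) + d) s y₀‖
      = ‖iteratedFDerivWithin ℝ j (fun y => g' (q y)) s y₀‖ := by
    rw [hm]; exact norm_itFDW_add_const hsu hy₀s m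
  -- the composition bound
  set C₁ : ℝ := a * Real.pi ^ β * Ksum * r ^ (α - (n:ℝ)) with hC₁def
  have hrpos : (0:ℝ) < r ^ (α - (n:ℝ)) := Real.rpow_pos_of_pos hr _
  have hC₁nn : 0 ≤ C₁ := by positivity
  have hmap : MapsTo q s (Ioi (0:ℝ)) := by
    intro y hy
    have hy0 : y ≠ 0 := by
      intro h
      rw [hsdef, Metric.mem_ball, h, dist_zero_left, hy₀] at hy
      norm_num at hy
    have : 0 < ‖y‖ := norm_pos_iff.2 hy0
    simp only [hqdef, mem_Ioi]
    positivity
  have hqy₀ : q y₀ = 1 := by rw [hqdef]; simp [hy₀]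
  have hg'cd : ContDiffOn ℝ j g' (Ioi (0:ℝ)) := by
    have hJc : ContDiffOn ℝ j (fun u : ℝ => J β (c * u)) (Ioi 0) := by
      apply (J_contDiffOn j β).comp ((contDiff_const.mul contDiff_id).contDiffOn)
      intro u hu
      have : (0:ℝ) < u := hu
      exact mul_pos hc this
    exact (contDiffOn_const.mul hJc).sub contDiffOn_const
  have hC : ∀ i, i ≤ j → ‖iteratedFDerivWithin ℝ i g' (Ioi (0:ℝ)) (q y₀)‖ ≤ C₁ := by
    intro i hi
    rw [hqy₀]
    match i, hi with
    | 0, _ =>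
      rw [norm_iteratedFDerivWithin_zero]
      have : g' 1 = 0 := by rw [hg'def]; simp
      rw [this, norm_zero]
      exact hC₁nn
    | (i + 1), hi =>
      rw [(iteratedFDerivWithin_of_isOpen _ isOpen_Ioi) (show (1:ℝ) ∈ Ioi 0 by norm_num),
        norm_iteratedFDeriv_eq_norm_iteratedDeriv]
      have h1 : iteratedDeriv (i+1) g' = iteratedDeriv (i+1) (fun u => a * J β (c * u)) := by
        rw [hg'def]
        exact iteratedDeriv_sub_const _ _ _ (Nat.succ_le_succ (Nat.zero_le i))
      rw [h1, iteratedDeriv_scaled a c β hc (i+1) 1 one_pos, mul_one]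
      set k : ℕ := i + 1 with hkdef
      have hk1 : (1:ℝ) ≤ (k:ℝ) := by exact_mod_cast Nat.succ_le_succ (Nat.zero_le i)
      have hγ : β - (k:ℝ) < 0 := by linarith
      have hJb : |J (β - k) c| ≤ (Real.pi * c) ^ (β - (k:ℝ)) * K (β - k - 1) :=
        J_bound hγ hc
      have hKle : K (β - (k:ℝ) - 1) ≤ Ksum := by
        rw [hKsumdef]
        exact Finset.single_le_sum hKnn (Finset.mem_Icc.2 ⟨by omega, by omega⟩)
      have habs : ‖a * (-Real.pi * c) ^ k * J (β - k) c‖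
          = a * (Real.pi * c) ^ k * |J (β - k) c| := by
        rw [Real.norm_eq_abs, abs_mul, abs_mul, abs_of_pos ha, neg_mul, abs_pow, abs_neg,
          abs_of_pos (mul_pos hπ hc)]
      rw [habs]
      have hπc : (0:ℝ) < Real.pi * c := mul_pos hπ hc
      calc a * (Real.pi * c) ^ k * |J (β - k) c|
          ≤ a * (Real.pi * c) ^ k * ((Real.pi * c) ^ (β - (k:ℝ)) * K (β - k - 1)) := by
            apply mul_le_mul_of_nonneg_left hJb (by positivity)
        _ = a * (Real.pi * c) ^ β * K (β - (k:ℝ) - 1) := by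
            rw [← Real.rpow_natCast (Real.pi * c) k,
              show a * (Real.pi * c) ^ (k:ℝ) * ((Real.pi * c) ^ (β - (k:ℝ)) * K (β - (k:ℝ) - 1))
                = a * ((Real.pi * c) ^ ((k:ℝ) + (β - (k:ℝ)))) * K (β - (k:ℝ) - 1) from by
                  rw [Real.rpow_add hπc]; ring]
            norm_num
        _ ≤ a * (Real.pi * c) ^ β * Ksum := by
            apply mul_le_mul_of_nonneg_left hKle (by positivity)
        _ = C₁ := by
            rw [hC₁def, Real.mul_rpow hπ.le hc.le, hcdef]
            have h2 : (r ^ 2) ^ β = r ^ (α - (n:ℝ)) := by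
              rw [← Real.rpow_natCast r 2, ← Real.rpow_mul hr.le]
              congr 1
              rw [hβdef]; push_cast; ring
            rw [h2]; ring
  have hD : ∀ i, 1 ≤ i → i ≤ j → ‖iteratedFDerivWithin ℝ i q s y₀‖ ≤ 2 ^ i := by
    intro i _ _
    rw [(iteratedFDerivWithin_of_isOpen i Metric.isOpen_ball) hy₀s, hqdef]
    exact norm_itFD_normsq_le i y₀ (le_of_eq hy₀)
  have step5 : ‖iteratedFDerivWithin ℝ j (fun y => g' (q y)) s y₀‖
      ≤ j.factorial * C₁ * 2 ^ j := by
    have h := norm_iteratedFDerivWithin_comp_le (𝕜 := ℝ) (g := g') (f := q)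
      (N := (j : WithTop ℕ∞)) hg'cd ((contDiff_norm_sq ℝ).contDiffOn) le_rfl
      htu hsu hmap hy₀s hC hD
    simpa [Function.comp_def, hqdef] using h
  -- final assembly
  rw [step1]
  calc ‖iteratedFDerivWithin ℝ j G (⇑(e.symm) ⁻¹' s) x‖
      ≤ ‖iteratedFDerivWithin ℝ j (fun y => g' (q y) + d) s y₀‖ * r⁻¹ ^ j := step3
    _ ≤ (j.factorial * C₁ * 2 ^ j) * r⁻¹ ^ j := by
        apply mul_le_mul_of_nonneg_right ?_ (by positivity)
        rw [step4]; exact step5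
    _ = (j.factorial * (a * Real.pi ^ β * Ksum) * 2 ^ j) * (r ^ (α - (n:ℝ)) * r⁻¹ ^ j) := by
        rw [hC₁def]; ring
    _ = (j.factorial * (a * Real.pi ^ β * Ksum) * 2 ^ j) * ‖x‖ ^ (α - n - j) := by
        have hexp : r ^ (α - (n:ℝ)) * r⁻¹ ^ j = r ^ (α - (n:ℝ) - (j:ℝ)) := by
          rw [inv_pow, ← Real.rpow_natCast r j, ← Real.rpow_neg hr.le, ← Real.rpow_add hr]
          congr 1
        rw [hexp]
end

section
/- Let v ∈ C^{k,α}(ℝⁿ, ℝ) (scalar case d = 1, m = 1) with |∇^k v(x) − ∇^k v(y)| ≤ |x−y|^α for all x, y. Let E₁ be the set of points x ∈ Z = {∇v = 0} such that x is a density point of {y : ∇^k v(y) = 0} and ∇^k v(x) = 0. Then for every x ∈ E₁, lim_{y→x} |∇^k v(y) − ∇^k v(x)| / |x − y|^α = 0. -/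
open MeasureTheory Metric Set Filter

/-- At a density point `x` of the zero set of the `α`-Hölder continuous `k`-th derivative
of `v` (with `∇^k v(x) = 0`, `∇v(x) = 0`), the Hölder quotient of `∇^k v` degenerates. -/
theorem holder_quotient_degenerates {n : ℕ} (k : ℕ) (hk : 1 ≤ k)
    (α : ℝ) (hα0 : 0 < α) (hα1 : α ≤ 1)
    (v : EuclideanSpace ℝ (Fin n) → ℝ) (hv : ContDiff ℝ k v)
    (hHold : ∀ x y, ‖iteratedFDeriv ℝ k v x - iteratedFDeriv ℝ k v y‖ ≤ ‖x - y‖ ^ α)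
    (x : EuclideanSpace ℝ (Fin n))
    (hxZ : fderiv ℝ v x = 0)
    (hxk : iteratedFDeriv ℝ k v x = 0)
    (hdens : Tendsto
      (fun r : ℝ => volume ({y | iteratedFDeriv ℝ k v y = 0} ∩ Metric.ball x r)
        / volume (Metric.ball x r))
      (nhdsWithin 0 (Set.Ioi 0)) (nhds 1)) :
    Tendsto (fun y => ‖iteratedFDeriv ℝ k v y - iteratedFDeriv ℝ k v x‖ / ‖x - y‖ ^ α)
      (nhdsWithin x {x}ᶜ) (nhds 0) := by
  rw [Metric.tendsto_nhdsWithin_nhds]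
  intro ε hε
  -- choose a small constant `c` with `c ^ α < ε`
  set c : ℝ := min (1 / 2) (ε ^ α⁻¹ / 2) with hc_def
  have hc0 : 0 < c := lt_min (by norm_num) (by positivity)
  have hcα : c ^ α < ε := by
    have h1 : c < ε ^ α⁻¹ := by
      have h2 : 0 < ε ^ α⁻¹ := Real.rpow_pos_of_pos hε _
      exact lt_of_le_of_lt (min_le_right _ _) (by linarith)
    calc c ^ α < (ε ^ α⁻¹) ^ α := Real.rpow_lt_rpow hc0.le h1 hα0
      _ = ε := Real.rpow_inv_rpow hε.le hα0.ne'
  set N := Module.finrank ℝ (EuclideanSpace ℝ (Fin n)) with hN_def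
  set θ : ENNReal := ENNReal.ofReal ((c / (1 + c)) ^ N) with hθ_def
  have h1c : (0:ℝ) < 1 + c := by linarith
  have hθ0 : 0 < θ := ENNReal.ofReal_pos.mpr (by positivity)
  have hθ1 : θ ≤ 1 := by
    rw [hθ_def, ← ENNReal.ofReal_one]
    refine ENNReal.ofReal_le_ofReal (pow_le_one₀ (by positivity) ?_)
    rw [div_le_one h1c]; linarith
  have hθtop : θ ≠ ⊤ := ENNReal.ofReal_ne_top
  have hθlt : (1:ENNReal) - θ < 1 := ENNReal.sub_lt_self ENNReal.one_ne_top one_ne_zero hθ0.ne'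
  have hev := hdens.eventually (eventually_gt_nhds hθlt)
  rw [eventually_nhdsWithin_iff] at hev
  obtain ⟨δ, hδ0, hδ⟩ := Metric.eventually_nhds_iff.mp hev
  refine ⟨δ / (1 + c), by positivity, ?_⟩
  intro y hy hdist
  have hyne : y ≠ x := hy
  set r : ℝ := ‖y - x‖ with hr_def
  have hr0 : 0 < r := by
    rw [hr_def, norm_pos_iff]
    exact sub_ne_zero_of_ne hyne
  have hrdist : r = dist y x := (dist_eq_norm y x).symm
  have hrδ : r < δ / (1 + c) := by rw [hrdist]; exact hdist
  set R : ℝ := (1 + c) * r with hR_def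
  have hR0 : 0 < R := by positivity
  have hRδ : R < δ := by
    have := (mul_lt_mul_iff_right₀ h1c).mpr hrδ
    rwa [mul_div_cancel₀ _ h1c.ne'] at this
  have hratio : 1 - θ <
      volume ({z | iteratedFDeriv ℝ k v z = 0} ∩ ball x R) / volume (ball x R) :=
    hδ (by simpa [Real.dist_eq, abs_of_pos hR0] using hRδ) (mem_Ioi.mpr hR0)
  have hball0 : volume (ball x R) ≠ 0 := (measure_ball_pos volume x hR0).ne'
  have hballtop : volume (ball x R) ≠ ⊤ := measure_ball_lt_top.ne
  -- find a zero of the k-th derivative close to y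
  obtain ⟨z, hz0, hzball⟩ :
      ∃ z, iteratedFDeriv ℝ k v z = 0 ∧ z ∈ ball y (c * r) := by
    by_contra h
    push_neg at h
    set A := {z | iteratedFDeriv ℝ k v z = 0} ∩ ball x R with hA_def
    set B := ball y (c * r) with hB_def
    have hBsub : B ⊆ ball x R := by
      intro w hw
      rw [mem_ball] at hw ⊢
      have : dist w x ≤ dist w y + dist y x := dist_triangle w y x
      rw [← hrdist] at this
      calc dist w x ≤ dist w y + r := this
        _ < c * r + r := by linarith
        _ = R := by rw [hR_def]; ring
    have hdisj : Disjoint A B := by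
      rw [Set.disjoint_left]
      rintro w ⟨hw1, _⟩ hw2
      exact h w hw1 hw2
    have hsum : volume A + volume B ≤ volume (ball x R) := by
      rw [← measure_union hdisj measurableSet_ball]
      exact measure_mono (union_subset inter_subset_right hBsub)
    have hBeq : θ * volume (ball x R) = volume B := by
      rw [Measure.addHaar_ball_of_pos volume x hR0,
        Measure.addHaar_ball_of_pos volume y (by positivity : (0:ℝ) < c * r),
        hθ_def, ← mul_assoc, ← ENNReal.ofReal_mul (by positivity), ← hN_def, ← mul_pow,
        show c / (1 + c) * R = c * r by rw [hR_def]; field_simp]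
    have hθle : θ ≤ volume B / volume (ball x R) := by
      rw [ENNReal.le_div_iff_mul_le (Or.inl hball0) (Or.inl hballtop)]
      exact hBeq.le
    have hA1 : volume A / volume (ball x R) + θ ≤ 1 := by
      calc volume A / volume (ball x R) + θ
          ≤ volume A / volume (ball x R) + volume B / volume (ball x R) :=
            add_le_add_right hθle _
        _ = (volume A + volume B) / volume (ball x R) := ENNReal.div_add_div_same
        _ ≤ volume (ball x R) / volume (ball x R) :=
            ENNReal.div_le_div_right hsum _
        _ = 1 := ENNReal.div_self hball0 hballtop
    have : (1:ENNReal) < 1 := by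
      calc (1:ENNReal) = (1 - θ) + θ := (tsub_add_cancel_of_le hθ1).symm
        _ < volume A / volume (ball x R) + θ := ENNReal.add_lt_add_right hθtop hratio
        _ ≤ 1 := hA1
    exact absurd this (lt_irrefl 1)
  -- conclude the bound on the Hölder quotient
  have hzy : ‖y - z‖ < c * r := by
    rw [← dist_eq_norm]
    exact mem_ball'.mp hzball
  have hnum : ‖iteratedFDeriv ℝ k v y - iteratedFDeriv ℝ k v x‖ ≤ (c * r) ^ α := by
    calc ‖iteratedFDeriv ℝ k v y - iteratedFDeriv ℝ k v x‖
        = ‖iteratedFDeriv ℝ k v y - iteratedFDeriv ℝ k v z‖ := by rw [hxk, hz0]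
      _ ≤ ‖y - z‖ ^ α := hHold y z
      _ ≤ (c * r) ^ α := Real.rpow_le_rpow (norm_nonneg _) hzy.le hα0.le
  have hxy : ‖x - y‖ = r := by rw [hr_def, norm_sub_rev]
  have hrα : (0:ℝ) < r ^ α := Real.rpow_pos_of_pos hr0 α
  have hquot : ‖iteratedFDeriv ℝ k v y - iteratedFDeriv ℝ k v x‖ / ‖x - y‖ ^ α ≤ c ^ α := by
    rw [hxy]
    calc ‖iteratedFDeriv ℝ k v y - iteratedFDeriv ℝ k v x‖ / r ^ α
        ≤ (c * r) ^ α / r ^ α := by gcongr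
      _ = c ^ α * r ^ α / r ^ α := by rw [Real.mul_rpow hc0.le hr0.le]
      _ = c ^ α := by rw [mul_div_assoc, div_self hrα.ne', mul_one]
  rw [Real.dist_eq, sub_zero, abs_of_nonneg (by positivity)]
  exact lt_of_le_of_lt hquot hcα
end
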